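/- Let V be a finite-dimensional vector space over a field k, equipped for each element v of a finite index set S with a decreasing filtration V = V^0_v ⊇ V^1_v ⊇ ⋯ ⊇ V^{r_v}_v ⊇ V^{r_v+1}_v = {0} and constants 0 < c_{v,1} < ⋯ < c_{v,r_v}. Define the slope of a nonzero subspace W ⊆ V by μ(W) = ∑_{v∈S} (1/dim W) ∑_{j=1}^{r_v} c_{v,j} (dim(W ∩ V^j_v) − dim(W ∩ V^{j+1}_v)). Then among subspaces of maximal slope μ₀ there is a unique one of maximal dimension W_HN, and every subspace W' with μ(W') = μ₀ satisfies W' ⊆ W_HN. -/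

import Mathlib

open Finset Module

/-- Abel summation identity. -/
lemma abel_sum' (c a : ℕ → ℝ) : ∀ r : ℕ,
    ∑ j ∈ Finset.Icc 1 r, c j * (a j - a (j + 1)) =
      (∑ j ∈ Finset.Icc 1 r, (c j - c (j - 1)) * a j) + c 0 * a 1 - c r * a (r + 1) := by
  intro r
  induction r with
  | zero => simp
  | succ n ih =>
      rw [Finset.sum_Icc_succ_top (by omega : 1 ≤ n + 1),
        Finset.sum_Icc_succ_top (by omega : 1 ≤ n + 1), ih]
      simp only [Nat.add_sub_cancel]
      ring

/-- Existence and maximality of the maximal destabilizing subspace `W_HN` for the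
Faltings–Wüstholz slope attached to filtrations `V = V⁰_v ⊇ ⋯ ⊇ V^{r_v+1}_v = 0`
with constants `0 < c_{v,1} < ⋯ < c_{v,r_v}`. -/
theorem stmt_2 (k V : Type*) [Field k] [AddCommGroup V] [Module k V]
    [FiniteDimensional k V]
    (S : Type*) [Fintype S]
    (r : S → ℕ) (F : S → ℕ → Submodule k V)
    (hF0 : ∀ v, F v 0 = ⊤)
    (hFdec : ∀ v j, F v (j + 1) ≤ F v j)
    (hFend : ∀ v, F v (r v + 1) = ⊥)
    (c : S → ℕ → ℝ)
    (hcpos : ∀ v j, 1 ≤ j → j ≤ r v → 0 < c v j)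
    (hcmono : ∀ v j, 1 ≤ j → j < r v → c v j < c v (j + 1))
    (μ : Submodule k V → ℝ)
    (hμ : ∀ W : Submodule k V, μ W = ∑ v, (1 / (Module.finrank k W : ℝ)) *
      ∑ j ∈ Finset.Icc 1 (r v), c v j *
        ((Module.finrank k ↥(W ⊓ F v j) : ℝ) -
          (Module.finrank k ↥(W ⊓ F v (j + 1)) : ℝ)))
    (μ₀ : ℝ)
    (hmax : ∀ W : Submodule k V, W ≠ ⊥ → μ W ≤ μ₀)
    (hach : ∃ W : Submodule k V, W ≠ ⊥ ∧ μ W = μ₀) :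
    ∃! WHN : Submodule k V, WHN ≠ ⊥ ∧ μ WHN = μ₀ ∧
      ∀ W' : Submodule k V, W' ≠ ⊥ → μ W' = μ₀ → W' ≤ WHN := by
  classical
  -- modified constants with value 0 at index 0
  set cc : S → ℕ → ℝ := fun v j => if j = 0 then 0 else c v j with hcc
  -- dimension function
  set g : Submodule k V → S → ℕ → ℝ :=
    fun W v j => (Module.finrank k ↥(W ⊓ F v j) : ℝ) with hg
  -- the degree
  set d : Submodule k V → ℝ :=
    fun W => ∑ v, ∑ j ∈ Finset.Icc 1 (r v), (cc v j - cc v (j - 1)) * g W v j with hd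
  -- nonnegativity of coefficients
  have he : ∀ v : S, ∀ j ∈ Finset.Icc 1 (r v), 0 ≤ cc v j - cc v (j - 1) := by
    intro v j hj
    simp only [Finset.mem_Icc] at hj
    rcases Nat.eq_or_lt_of_le hj.1 with h1 | h1
    · simp only [hcc, ← h1]
      norm_num
      exact (hcpos v 1 le_rfl (h1 ▸ hj.2)).le
    · have h2 : 2 ≤ j := h1
      have : cc v j = c v j := by simp [hcc]; omega
      rw [this]
      have : cc v (j - 1) = c v (j - 1) := by simp [hcc]; omega
      rw [this]
      have := hcmono v (j - 1) (by omega) (by omega)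
      have hj1 : j - 1 + 1 = j := by omega
      rw [hj1] at this
      linarith
  -- d agrees with the defining sum
  have hdeq : ∀ W : Submodule k V,
      d W = ∑ v, ∑ j ∈ Finset.Icc 1 (r v), c v j * (g W v j - g W v (j + 1)) := by
    intro W
    refine Finset.sum_congr rfl fun v _ => ?_
    have hgz : g W v (r v + 1) = 0 := by
      simp only [hg]
      rw [hFend, inf_bot_eq]
      simp
    have hccz : cc v 0 = 0 := by simp [hcc]
    have habel := abel_sum' (cc v) (g W v) (r v)
    rw [hccz, hgz, zero_mul, mul_zero, add_zero, sub_zero] at habel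
    rw [← habel]
    refine Finset.sum_congr rfl fun j hj => ?_
    simp only [Finset.mem_Icc] at hj
    have : cc v j = c v j := by simp [hcc]; omega
    rw [this]
  -- d = finrank * μ for nonzero W
  have hrankpos : ∀ W : Submodule k V, W ≠ ⊥ → 0 < (Module.finrank k W : ℝ) := by
    intro W hW
    have : Module.finrank k W ≠ 0 := by
      rw [Ne, Submodule.finrank_eq_zero]; exact hW
    positivity
  have hdμ : ∀ W : Submodule k V, W ≠ ⊥ → d W = (Module.finrank k W : ℝ) * μ W := by
    intro W hW
    rw [hμ W, Finset.mul_sum, hdeq W]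
    refine Finset.sum_congr rfl fun v _ => ?_
    rw [← mul_assoc, mul_one_div, div_self (hrankpos W hW).ne', one_mul]
  -- d W ≤ μ₀ * finrank W always
  have hdle : ∀ W : Submodule k V, d W ≤ μ₀ * (Module.finrank k W : ℝ) := by
    intro W
    by_cases hW : W = ⊥
    · subst hW
      have : d ⊥ = 0 := by
        rw [hdeq]
        refine Finset.sum_eq_zero fun v _ => Finset.sum_eq_zero fun j _ => ?_
        have hb : ∀ m : ℕ, g (⊥ : Submodule k V) v m = 0 := by
          intro m
          simp only [hg]
          rw [bot_inf_eq]
          simp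
        rw [hb, hb, sub_self, mul_zero]
      rw [this]
      simp
    · rw [hdμ W hW]
      have h1 := hmax W hW
      have h2 := hrankpos W hW
      nlinarith
  -- submodularity
  have hsub : ∀ W1 W2 : Submodule k V,
      d W1 + d W2 ≤ d (W1 ⊔ W2) + d (W1 ⊓ W2) := by
    intro W1 W2
    simp only [hd, ← Finset.sum_add_distrib]
    refine Finset.sum_le_sum fun v _ => Finset.sum_le_sum fun j hj => ?_
    rw [← mul_add, ← mul_add]
    refine mul_le_mul_of_nonneg_left ?_ (he v j hj)
    -- rank inequality
    have key : Module.finrank k ↥(W1 ⊓ F v j) + Module.finrank k ↥(W2 ⊓ F v j) ≤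
        Module.finrank k ↥((W1 ⊔ W2) ⊓ F v j) + Module.finrank k ↥((W1 ⊓ W2) ⊓ F v j) := by
      have h1 := Submodule.finrank_sup_add_finrank_inf_eq (W1 ⊓ F v j) (W2 ⊓ F v j)
      have h2 : (W1 ⊓ F v j) ⊔ (W2 ⊓ F v j) ≤ (W1 ⊔ W2) ⊓ F v j := by
        apply sup_le
        · exact le_inf (le_trans inf_le_left le_sup_left) inf_le_right
        · exact le_inf (le_trans inf_le_left le_sup_right) inf_le_right
      have h3 : (W1 ⊓ F v j) ⊓ (W2 ⊓ F v j) = (W1 ⊓ W2) ⊓ F v j := by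
        rw [inf_inf_inf_comm, inf_idem]
      have h4 := Submodule.finrank_mono h2
      rw [h3] at h1
      omega
    simp only [hg]
    push_cast
    exact_mod_cast key
  -- the set of μ₀-achieving submodules is closed under sup
  have hsupcl : ∀ W1 W2 : Submodule k V, W1 ≠ ⊥ → W2 ≠ ⊥ → μ W1 = μ₀ → μ W2 = μ₀ →
      μ (W1 ⊔ W2) = μ₀ := by
    intro W1 W2 h1 h2 hμ1 hμ2
    have hsne : W1 ⊔ W2 ≠ ⊥ := fun h => h1 (by
      have := le_sup_left (a := W1) (b := W2)
      rw [h] at this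
      exact le_bot_iff.mp this)
    have hrk : (Module.finrank k ↥(W1 ⊔ W2) : ℝ) + (Module.finrank k ↥(W1 ⊓ W2) : ℝ) =
        (Module.finrank k W1 : ℝ) + (Module.finrank k W2 : ℝ) := by
      exact_mod_cast congrArg (Nat.cast : ℕ → ℝ)
        (Submodule.finrank_sup_add_finrank_inf_eq W1 W2)
    have hd1 : d W1 = (Module.finrank k W1 : ℝ) * μ₀ := by rw [hdμ W1 h1, hμ1]
    have hd2 : d W2 = (Module.finrank k W2 : ℝ) * μ₀ := by rw [hdμ W2 h2, hμ2]
    have hineq := hsub W1 W2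
    have hinfle := hdle (W1 ⊓ W2)
    have hsupval := hdμ _ hsne
    have hpos := hrankpos _ hsne
    -- d(sup) ≥ μ₀ * finrank(sup)
    have hrk2 : μ₀ * (Module.finrank k ↥(W1 ⊔ W2) : ℝ) +
        μ₀ * (Module.finrank k ↥(W1 ⊓ W2) : ℝ) =
        μ₀ * (Module.finrank k W1 : ℝ) + μ₀ * (Module.finrank k W2 : ℝ) := by
      rw [← mul_add, ← mul_add, hrk]
    have hge : μ₀ * (Module.finrank k ↥(W1 ⊔ W2) : ℝ) ≤ d (W1 ⊔ W2) := by linarith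
    have h' : μ₀ * (Module.finrank k ↥(W1 ⊔ W2) : ℝ) ≤
        μ (W1 ⊔ W2) * (Module.finrank k ↥(W1 ⊔ W2) : ℝ) := by
      rw [hsupval] at hge
      linarith
    exact le_antisymm (hmax _ hsne) (le_of_mul_le_mul_right h' hpos)
  -- find element of maximal finrank
  set T : Set ℕ := {n | ∃ W : Submodule k V, W ≠ ⊥ ∧ μ W = μ₀ ∧ Module.finrank k W = n}
    with hT
  obtain ⟨W0, hW0ne, hW0μ⟩ := hach
  have hTne : T.Nonempty := ⟨_, W0, hW0ne, hW0μ, rfl⟩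
  have hTbdd : BddAbove T := by
    refine ⟨Module.finrank k V, fun n hn => ?_⟩
    obtain ⟨W, _, _, hWn⟩ := hn
    rw [← hWn]
    exact Submodule.finrank_le W
  obtain ⟨WHN, hWHNne, hWHNμ, hWHNrk⟩ := Nat.sSup_mem hTne hTbdd
  have hmaxrk : ∀ W : Submodule k V, W ≠ ⊥ → μ W = μ₀ →
      Module.finrank k W ≤ Module.finrank k WHN := by
    intro W hWne hWμ
    rw [hWHNrk]
    exact le_csSup hTbdd ⟨W, hWne, hWμ, rfl⟩
  have hkey : ∀ W' : Submodule k V, W' ≠ ⊥ → μ W' = μ₀ → W' ≤ WHN := by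
    intro W' hW'ne hW'μ
    have hsupne : W' ⊔ WHN ≠ ⊥ := fun h => hWHNne (by
      have := le_sup_right (a := W') (b := WHN)
      rw [h] at this
      exact le_bot_iff.mp this)
    have hμsup := hsupcl W' WHN hW'ne hWHNne hW'μ hWHNμ
    have hle : WHN ≤ W' ⊔ WHN := le_sup_right
    have hrkle := hmaxrk _ hsupne hμsup
    have : WHN = W' ⊔ WHN := Submodule.eq_of_le_of_finrank_le hle hrkle
    rw [this]
    exact le_sup_left
  refine ⟨WHN, ⟨hWHNne, hWHNμ, hkey⟩, ?_⟩
  rintro W ⟨hWne, hWμ, hWkey⟩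
  exact le_antisymm (hkey W hWne hWμ) (hWkey WHN hWHNne hWHNμ)
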